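/- Let s ∈ ℂ with 2s ∉ ℤ, let 0 ≤ ℓ ≤ n, and let λ, μ ∈ Λ_{s^ℓ}(n). Then the following are equivalent: (a) there exist w ∈ S_n, complex numbers k_j, and finitely many pairwise orthogonal roots α_j ∈ Φ with (λ, ᾱ_j) = 0 for all j, such that μ = w(λ − Σ_j k_j α_j); (b) wt(λ) = wt(μ). -/

import Mathlib

open Finset

noncomputable section

/-- The `i`-th standard basis vector of `ℂ^n`. -/
def eps (n : ℕ) (i : Fin n) : Fin n → ℂ := fun t => if t = i then 1 else 0

/-- The standard symmetric bilinear form on `ℂ^n`. -/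
def pform {n : ℕ} (x y : Fin n → ℂ) : ℂ := ∑ i, x i * y i

/-- Membership in `Λ_{s^ℓ}(n)` (indices written `0`-based: the first `ℓ` coordinates are
congruent to `s` mod `ℤ`, the remaining ones to `-s`). -/
def InLambda (n ℓ : ℕ) (s : ℂ) (lam : Fin n → ℂ) : Prop :=
  ∀ i : Fin n, (i.val < ℓ → ∃ m : ℤ, lam i - s = (m : ℂ)) ∧
    (ℓ ≤ i.val → ∃ m : ℤ, lam i + s = (m : ℂ))

open scoped Classical in
/-- The weight function `wt(λ) : ℤ → ℤ` of `λ ∈ Λ_{s^ℓ}(n)`: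
`wt(λ) = ∑_{i ≤ ℓ} δ_{λ_i - s} - ∑_{i > ℓ} δ_{-λ_i - s}`. -/
def wtFn (n ℓ : ℕ) (s : ℂ) (lam : Fin n → ℂ) : ℤ → ℤ := fun a =>
  (∑ i ∈ Finset.univ.filter (fun i : Fin n => i.val < ℓ),
      if lam i - s = (a : ℂ) then 1 else 0)
  - ∑ i ∈ Finset.univ.filter (fun i : Fin n => ℓ ≤ i.val),
      if -lam i - s = (a : ℂ) then 1 else 0

def plA (n ℓ : ℕ) (f : Fin n → ℂ) : Multiset ℂ :=
  (Finset.univ.filter (fun i : Fin n => i.val < ℓ)).val.map f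

def miB (n ℓ : ℕ) (f : Fin n → ℂ) : Multiset ℂ :=
  (Finset.univ.filter (fun i : Fin n => ℓ ≤ i.val)).val.map (fun i => -f i)

lemma count_map_finset {α β : Type*} [DecidableEq β] (s : Finset α) (f : α → β) (x : β) :
    Multiset.count x (s.val.map f) = ∑ i ∈ s, if f i = x then 1 else 0 := by
  classical
  rw [Multiset.count_map]
  rw [Finset.sum_boole]
  calc Multiset.card (Multiset.filter (fun a => x = f a) s.val)
      = (s.filter (fun a => x = f a)).card := by rw [← Finset.filter_val]; rfl
    _ = (s.filter (fun a => f a = x)).card := by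
        congr 1; exact Finset.filter_congr (by intro y _; simp [eq_comm])
    _ = _ := by simp

lemma wt_eq_count (n ℓ : ℕ) (s : ℂ) (lam : Fin n → ℂ) (m : ℤ) :
    wtFn n ℓ s lam m = (Multiset.count ((m:ℂ) + s) (plA n ℓ lam) : ℤ)
      - Multiset.count ((m:ℂ) + s) (miB n ℓ lam) := by
  classical
  rw [wtFn, plA, miB, count_map_finset, count_map_finset]
  push_cast
  congr 1
  · exact Finset.sum_congr rfl (fun i _ => by simp only [sub_eq_iff_eq_add])
  · exact Finset.sum_congr rfl (fun i _ => by simp only [sub_eq_iff_eq_add])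

lemma count_plA_eq_zero {n ℓ : ℕ} {s : ℂ} {f : Fin n → ℂ} {x : ℂ}
    (h1 : InLambda n ℓ s f) (hx : ¬ ∃ m : ℤ, x - s = (m : ℂ)) :
    Multiset.count x (plA n ℓ f) = 0 := by
  classical
  rw [Multiset.count_eq_zero]
  intro hmem
  obtain ⟨i, hi, hfi⟩ := Multiset.mem_map.mp hmem
  have hi' : i.val < ℓ := (Finset.mem_filter.mp (Finset.mem_val.mp hi)).2
  obtain ⟨m, hm⟩ := (h1 i).1 hi'
  exact hx ⟨m, by rw [← hfi]; exact hm⟩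

lemma count_miB_eq_zero {n ℓ : ℕ} {s : ℂ} {f : Fin n → ℂ} {x : ℂ}
    (h1 : InLambda n ℓ s f) (hx : ¬ ∃ m : ℤ, x - s = (m : ℂ)) :
    Multiset.count x (miB n ℓ f) = 0 := by
  classical
  rw [Multiset.count_eq_zero]
  intro hmem
  obtain ⟨i, hi, hfi⟩ := Multiset.mem_map.mp hmem
  have hi' : ℓ ≤ i.val := (Finset.mem_filter.mp (Finset.mem_val.mp hi)).2
  obtain ⟨m, hm⟩ := (h1 i).2 hi'
  exact hx ⟨-m, by rw [← hfi]; push_cast; linear_combination -hm⟩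

lemma wt_to_multiset {n ℓ : ℕ} {s : ℂ} {lam mu : Fin n → ℂ}
    (h1 : InLambda n ℓ s lam) (h2 : InLambda n ℓ s mu)
    (hwt : wtFn n ℓ s lam = wtFn n ℓ s mu) :
    plA n ℓ lam + miB n ℓ mu = plA n ℓ mu + miB n ℓ lam := by
  classical
  ext x
  simp only [Multiset.count_add]
  by_cases hx : ∃ m : ℤ, x - s = (m : ℂ)
  · obtain ⟨m, hm⟩ := hx
    have hxe : (m:ℂ) + s = x := by linear_combination -hm
    have h := congrFun hwt m
    rw [wt_eq_count, wt_eq_count, hxe] at h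
    omega
  · rw [count_plA_eq_zero h1 hx, count_plA_eq_zero h2 hx,
      count_miB_eq_zero h1 hx, count_miB_eq_zero h2 hx]
lemma pform_eps_sub (n : ℕ) (i j k l : Fin n) :
    pform (eps n i - eps n j) (eps n k - eps n l) =
      ((if i = k then (1:ℂ) else 0) - (if i = l then 1 else 0))
      - ((if j = k then 1 else 0) - (if j = l then 1 else 0)) := by
  classical
  simp only [pform, eps, Pi.sub_apply, sub_mul, mul_sub, ite_mul, one_mul, zero_mul,
    mul_ite, mul_one, mul_zero, Finset.sum_sub_distrib, Finset.sum_ite_eq', Finset.mem_univ,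
    if_true]
  simp only [@eq_comm (Fin n) k i, @eq_comm (Fin n) k j, @eq_comm (Fin n) l i,
    @eq_comm (Fin n) l j]
  ring

lemma pform_eps_add (n : ℕ) (f : Fin n → ℂ) (i j : Fin n) :
    pform f (eps n i + eps n j) = f i + f j := by
  classical
  simp [pform, eps, Pi.add_apply, mul_add, Finset.sum_add_distrib, mul_ite, mul_one, mul_zero,
    Finset.sum_ite_eq', Finset.mem_univ]

lemma card_subtype_eq_count {α β : Type*} [Fintype α] [DecidableEq β] (f : α → β) (b : β) :
    Fintype.card {a // f a = b} = Multiset.count b (Finset.univ.val.map f) := by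
  classical
  rw [Multiset.count_map]
  calc Fintype.card {a // f a = b} = (Finset.univ.filter (fun a => f a = b)).card :=
        Fintype.card_subtype _
    _ = (Finset.univ.filter (fun a => b = f a)).card := by
        congr 1; exact Finset.filter_congr (by intro x _; simp [eq_comm])
    _ = Multiset.card (Multiset.filter (fun a => b = f a) Finset.univ.val) := by
        rw [← Finset.filter_val]; rfl

lemma exists_perm_of_map_univ_eq {α β : Type*} [Fintype α] (f g : α → β)
    (h : Finset.univ.val.map f = Finset.univ.val.map g) :
    ∃ σ : Equiv.Perm α, f = g ∘ σ := by
  classical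
  have hcard : ∀ b : β, Fintype.card {a // f a = b} = Fintype.card {a // g a = b} := by
    intro b
    have e1 := card_subtype_eq_count f b
    have e2 := card_subtype_eq_count g b
    rw [h] at e1
    convert e1.trans e2.symm
  refine ⟨Equiv.ofFiberEquiv (fun b => Fintype.equivOfCardEq (hcard b)), ?_⟩
  funext a
  exact (Equiv.ofFiberEquiv_map _ a).symm


lemma key {n ℓ : ℕ} {s : ℂ} :
    ∀ (m : ℕ) (lam mu : Fin n → ℂ), InLambda n ℓ s lam → InLambda n ℓ s mu →
    plA n ℓ lam + miB n ℓ mu = plA n ℓ mu + miB n ℓ lam →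
    Multiset.card (plA n ℓ lam - plA n ℓ mu) = m →
    ∃ (N : ℕ) (a b : Fin N → Fin n) (c : Fin N → ℂ) (w : Equiv.Perm (Fin n)),
      (∀ t, (a t).val < ℓ) ∧ (∀ t, ℓ ≤ (b t).val) ∧
      Function.Injective a ∧ Function.Injective b ∧
      (∀ t, lam (a t) + lam (b t) = 0) ∧
      (∀ t, Multiset.count (lam (a t)) (plA n ℓ mu)
          < Multiset.count (lam (a t)) (plA n ℓ lam)) ∧
      mu = (lam - ∑ t, c t • (eps n (a t) - eps n (b t))) ∘ w := by
  classical
  intro m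
  induction m with
  | zero =>
    intro lam mu h1 h2 heq hcard
    have h0 : plA n ℓ lam - plA n ℓ mu = 0 := Multiset.card_eq_zero.mp hcard
    have hle : plA n ℓ lam ≤ plA n ℓ mu := tsub_eq_zero_iff_le.mp h0
    have hAeq : plA n ℓ lam = plA n ℓ mu :=
      Multiset.eq_of_le_of_card_le hle (by simp [plA])
    have hBeq : miB n ℓ mu = miB n ℓ lam := by
      have h' := heq; rw [hAeq] at h'; exact add_left_cancel h'
    have base : (Finset.univ.val : Multiset (Fin n)) =
        (Finset.univ.filter (fun i : Fin n => i.val < ℓ)).val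
          + (Finset.univ.filter (fun i : Fin n => ℓ ≤ i.val)).val := by
      have hfq : (Finset.univ.filter (fun i : Fin n => ℓ ≤ i.val)).val
          = Multiset.filter (fun a : Fin n => ¬ a.val < ℓ) Finset.univ.val := by
        rw [Finset.filter_val]
        exact Multiset.filter_congr (fun k _ => by omega)
      rw [Finset.filter_val, hfq, Multiset.filter_add_not]
    have hmap : ∀ f : Fin n → ℂ,
        (Finset.univ.filter (fun i : Fin n => ℓ ≤ i.val)).val.map f
          = Multiset.map Neg.neg (miB n ℓ f) := by
      intro f
      rw [miB, Multiset.map_map]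
      exact (Multiset.map_congr rfl (fun k _ => by simp)).symm
    have huniv : Finset.univ.val.map mu = Finset.univ.val.map lam := by
      rw [base, Multiset.map_add, Multiset.map_add]
      rw [show ((Finset.univ.filter (fun i : Fin n => i.val < ℓ)).val.map mu) = plA n ℓ mu
        from rfl]
      rw [show ((Finset.univ.filter (fun i : Fin n => i.val < ℓ)).val.map lam) = plA n ℓ lam
        from rfl]
      rw [hmap, hmap, hAeq, hBeq]
    obtain ⟨w, hw⟩ := exists_perm_of_map_univ_eq mu lam huniv
    exact ⟨0, Fin.elim0, Fin.elim0, Fin.elim0, w,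
      fun t => t.elim0, fun t => t.elim0, fun t => t.elim0, fun t => t.elim0,
      fun t => t.elim0, fun t => t.elim0, by simpa using hw⟩
  | succ m ih =>
    intro lam mu h1 h2 heq hcard
    obtain ⟨x, hxmem⟩ := Multiset.card_pos_iff_exists_mem.mp
      (by rw [hcard]; exact Nat.succ_pos m)
    have hx : Multiset.count x (plA n ℓ mu) < Multiset.count x (plA n ℓ lam) := by
      have hp := Multiset.count_pos.mpr hxmem
      rw [Multiset.count_sub] at hp; omega
    have hCA : plA n ℓ mu - plA n ℓ lam ≠ 0 := by
      intro h0
      have hle : plA n ℓ mu ≤ plA n ℓ lam := tsub_eq_zero_iff_le.mp h0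
      have hEq : plA n ℓ mu = plA n ℓ lam :=
        Multiset.eq_of_le_of_card_le hle (by simp [plA])
      rw [hEq] at hx; omega
    obtain ⟨y, hymem⟩ := Multiset.exists_mem_of_ne_zero hCA
    have hy : Multiset.count y (plA n ℓ lam) < Multiset.count y (plA n ℓ mu) := by
      have hp := Multiset.count_pos.mpr hymem
      rw [Multiset.count_sub] at hp; omega
    have hxy : x ≠ y := fun h => by rw [h] at hx; omega
    have hxA : x ∈ plA n ℓ lam := Multiset.count_pos.mp (by omega)
    obtain ⟨i, hiPl, hix⟩ := Multiset.mem_map.mp hxA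
    have hiℓ : i.val < ℓ := (Finset.mem_filter.mp (Finset.mem_val.mp hiPl)).2
    have hcnt := congrArg (Multiset.count x) heq
    simp only [Multiset.count_add] at hcnt
    have hxB : x ∈ miB n ℓ lam := Multiset.count_pos.mp (by omega)
    obtain ⟨j, hjMi, hjx⟩ := Multiset.mem_map.mp hxB
    have hjℓ : ℓ ≤ j.val := (Finset.mem_filter.mp (Finset.mem_val.mp hjMi)).2
    have hij : i ≠ j := fun h => by rw [h] at hiℓ; omega
    have hyC : y ∈ plA n ℓ mu := Multiset.count_pos.mp (by omega)
    obtain ⟨p, hpPl, hpy⟩ := Multiset.mem_map.mp hyC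
    have hpℓ : p.val < ℓ := (Finset.mem_filter.mp (Finset.mem_val.mp hpPl)).2
    obtain ⟨my, hmy⟩ := (h2 p).1 hpℓ
    have hys : y - s = (my : ℂ) := by rw [← hpy]; exact hmy
    set lam1 : Fin n → ℂ := Function.update (Function.update lam i y) j (-y) with hlam1
    have l1i : lam1 i = y := by
      rw [hlam1]; rw [Function.update_of_ne hij, Function.update_self]
    have l1j : lam1 j = -y := by rw [hlam1, Function.update_self]
    have l1o : ∀ k, k ≠ i → k ≠ j → lam1 k = lam k := fun k hki hkj => by
      rw [hlam1, Function.update_of_ne hkj, Function.update_of_ne hki]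
    have h11 : InLambda n ℓ s lam1 := by
      intro k
      constructor
      · intro hk
        by_cases hki : k = i
        · subst hki; rw [l1i]; exact ⟨my, hys⟩
        · have hkj : k ≠ j := fun h => by rw [h] at hk; omega
          rw [l1o k hki hkj]; exact (h1 k).1 hk
      · intro hk
        by_cases hkj : k = j
        · subst hkj; rw [l1j]; exact ⟨-my, by push_cast; linear_combination -hys⟩
        · have hki : k ≠ i := fun h => by rw [h] at hk; omega
          rw [l1o k hki hkj]; exact (h1 k).2 hk
    set T : Multiset ℂ :=
      (((Finset.univ.filter (fun i : Fin n => i.val < ℓ)).val.erase i).map lam) with hT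
    set U : Multiset ℂ :=
      (((Finset.univ.filter (fun i : Fin n => ℓ ≤ i.val)).val.erase j).map
        (fun k => -lam k)) with hU
    have hPlcons : (Finset.univ.filter (fun i : Fin n => i.val < ℓ)).val
        = i ::ₘ ((Finset.univ.filter (fun i : Fin n => i.val < ℓ)).val.erase i) :=
      (Multiset.cons_erase hiPl).symm
    have hMicons : (Finset.univ.filter (fun i : Fin n => ℓ ≤ i.val)).val
        = j ::ₘ ((Finset.univ.filter (fun i : Fin n => ℓ ≤ i.val)).val.erase j) :=
      (Multiset.cons_erase hjMi).symm
    have hA : plA n ℓ lam = x ::ₘ T := by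
      rw [plA, hPlcons, Multiset.map_cons, hix, hT]
    have hB : miB n ℓ lam = x ::ₘ U := by
      rw [miB, hMicons, Multiset.map_cons, hjx, hU]
    have hA1 : plA n ℓ lam1 = y ::ₘ T := by
      rw [plA, hPlcons, Multiset.map_cons, l1i, hT]
      congr 1
      refine Multiset.map_congr rfl (fun k hk => ?_)
      have hmem := ((Finset.univ.filter (fun i : Fin n => i.val < ℓ)).nodup.mem_erase_iff).mp hk
      have hkℓ : k.val < ℓ := (Finset.mem_filter.mp (Finset.mem_val.mp hmem.2)).2
      exact l1o k hmem.1 (fun h => by rw [h] at hkℓ; omega)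
    have hB1 : miB n ℓ lam1 = y ::ₘ U := by
      rw [miB, hMicons, Multiset.map_cons, l1j, neg_neg, hU]
      congr 1
      refine Multiset.map_congr rfl (fun k hk => ?_)
      have hmem := ((Finset.univ.filter (fun i : Fin n => ℓ ≤ i.val)).nodup.mem_erase_iff).mp hk
      have hkℓ : ℓ ≤ k.val := (Finset.mem_filter.mp (Finset.mem_val.mp hmem.2)).2
      rw [l1o k (fun h => by rw [h] at hkℓ; omega) hmem.1]
    have heq1 : plA n ℓ lam1 + miB n ℓ mu = plA n ℓ mu + miB n ℓ lam1 := by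
      have h' := heq
      rw [hA, hB, Multiset.cons_add, Multiset.add_cons] at h'
      have h'' : T + miB n ℓ mu = plA n ℓ mu + U := (Multiset.cons_inj_right x).mp h'
      rw [hA1, hB1, Multiset.cons_add, Multiset.add_cons, h'']
    have hxT : Multiset.count x (plA n ℓ mu) ≤ Multiset.count x T := by
      rw [hA, Multiset.count_cons_self] at hx; omega
    have hyT : Multiset.count y (plA n ℓ lam) = Multiset.count y T := by
      rw [hA, Multiset.count_cons_of_ne (Ne.symm hxy)]
    have hsub : plA n ℓ lam - plA n ℓ mu = x ::ₘ (plA n ℓ lam1 - plA n ℓ mu) := by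
      ext z
      by_cases hzx : z = x
      · subst hzx
        rw [Multiset.count_cons_self, Multiset.count_sub, Multiset.count_sub, hA, hA1,
          Multiset.count_cons_self, Multiset.count_cons_of_ne hxy]
        omega
      · by_cases hzy : z = y
        · subst hzy
          rw [Multiset.count_cons_of_ne hzx, Multiset.count_sub, Multiset.count_sub, hA, hA1,
            Multiset.count_cons_of_ne (Ne.symm hxy), Multiset.count_cons_self]
          have hyy := hy; rw [hyT] at hyy
          omega
        · rw [Multiset.count_cons_of_ne hzx, Multiset.count_sub, Multiset.count_sub, hA, hA1,
            Multiset.count_cons_of_ne hzx, Multiset.count_cons_of_ne hzy]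
    have hcard1 : Multiset.card (plA n ℓ lam1 - plA n ℓ mu) = m := by
      have hc := congrArg Multiset.card hsub
      rw [hcard, Multiset.card_cons] at hc; omega
    obtain ⟨N, a, b, c, w, ha, hb, hainj, hbinj, hzero, hcount, hmu⟩ :=
      ih lam1 mu h11 h2 heq1 hcard1
    have hyT2 : Multiset.count y (plA n ℓ lam1) ≤ Multiset.count y (plA n ℓ mu) := by
      rw [hA1, Multiset.count_cons_self]; omega
    have hlv : ∀ t, lam1 (a t) ≠ y := by
      intro t heqv
      have hc := hcount t; rw [heqv] at hc; omega
    have hai : ∀ t, a t ≠ i := fun t h => hlv t (by rw [h, l1i])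
    have haj : ∀ t, a t ≠ j := fun t h => by have := ha t; rw [h] at this; omega
    have hbi : ∀ t, b t ≠ i := fun t h => by have := hb t; rw [h] at this; omega
    have hbj : ∀ t, b t ≠ j := by
      intro t h
      apply hlv t
      have h0 := hzero t
      rw [h, l1j] at h0
      linear_combination h0
    have hlam_at : ∀ t, lam (a t) = lam1 (a t) := fun t => (l1o _ (hai t) (haj t)).symm
    have hlam_bt : ∀ t, lam (b t) = lam1 (b t) := fun t => (l1o _ (hbi t) (hbj t)).symm
    have hl1 : lam1 = lam - (x - y) • (eps n i - eps n j) := by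
      funext k
      simp only [Pi.sub_apply, Pi.smul_apply, smul_eq_mul, eps]
      by_cases hki : k = i
      · subst hki
        rw [l1i, if_pos rfl, if_neg hij, ← hix]; ring
      · by_cases hkj : k = j
        · subst hkj
          rw [l1j, if_neg (Ne.symm hij), if_pos rfl]
          rw [show lam k = -x from by linear_combination -hjx]; ring
        · rw [l1o k hki hkj, if_neg hki, if_neg hkj]; ring
    refine ⟨N + 1, Fin.cons i a, Fin.cons j b, Fin.cons (x - y) c, w, ?_, ?_, ?_, ?_, ?_, ?_, ?_⟩
    · intro t
      refine Fin.cases ?_ ?_ t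
      · simpa using hiℓ
      · intro t'; simpa using ha t'
    · intro t
      refine Fin.cases ?_ ?_ t
      · simpa using hjℓ
      · intro t'; simpa using hb t'
    · exact Fin.cons_injective_iff.mpr ⟨fun ⟨t, ht⟩ => hai t ht, hainj⟩
    · exact Fin.cons_injective_iff.mpr ⟨fun ⟨t, ht⟩ => hbj t ht, hbinj⟩
    · intro t
      refine Fin.cases ?_ ?_ t
      · simp only [Fin.cons_zero]
        rw [hix, show lam j = -x from by linear_combination -hjx]; ring
      · intro t'
        simp only [Fin.cons_succ]
        rw [hlam_at, hlam_bt]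
        exact hzero t'
    · intro t
      refine Fin.cases ?_ ?_ t
      · simp only [Fin.cons_zero]
        rw [hix]
        exact hx
      · intro t'
        simp only [Fin.cons_succ]
        rw [hlam_at]
        have hc := hcount t'
        have hvy : lam1 (a t') ≠ y := hlv t'
        have e1 : Multiset.count (lam1 (a t')) (plA n ℓ lam1)
            = Multiset.count (lam1 (a t')) T := by
          rw [hA1, Multiset.count_cons_of_ne hvy]
        have e2 : Multiset.count (lam1 (a t')) T ≤ Multiset.count (lam1 (a t')) (plA n ℓ lam) := by
          rw [hA, Multiset.count_cons]
          omega
        omega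
    · rw [Fin.sum_univ_succ]
      simp only [Fin.cons_zero, Fin.cons_succ]
      rw [hmu, hl1, sub_add_eq_sub_sub]
open scoped Classical in
lemma pair_contrib {n ℓ : ℕ} {s : ℂ} (hs : ∀ m : ℤ, 2 * s ≠ (m : ℂ)) {lam : Fin n → ℂ}
    (h1 : InLambda n ℓ s lam) (i j : Fin n) (hij : lam i + lam j = 0) (z : ℤ) :
    ((if i.val < ℓ then (if lam i - s = (z:ℂ) then (1:ℤ) else 0) else 0)
      - (if ℓ ≤ i.val then (if -lam i - s = (z:ℂ) then 1 else 0) else 0))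
    + ((if j.val < ℓ then (if lam j - s = (z:ℂ) then (1:ℤ) else 0) else 0)
      - (if ℓ ≤ j.val then (if -lam j - s = (z:ℂ) then 1 else 0) else 0)) = 0 := by
  by_cases hi : i.val < ℓ <;> by_cases hj : j.val < ℓ
  · exfalso
    obtain ⟨m1, hm1⟩ := (h1 i).1 hi
    obtain ⟨m2, hm2⟩ := (h1 j).1 hj
    exact hs (-(m1 + m2)) (by push_cast; linear_combination -hm1 - hm2 + hij)
  · rw [if_pos hi, if_neg (by omega : ¬ ℓ ≤ i.val), if_neg hj, if_pos (by omega : ℓ ≤ j.val),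
      show -lam j = lam i from by linear_combination -hij]
    ring
  · rw [if_neg hi, if_pos (by omega : ℓ ≤ i.val), if_pos hj, if_neg (by omega : ¬ ℓ ≤ j.val),
      show -lam i = lam j from by linear_combination -hij]
    ring
  · exfalso
    obtain ⟨m1, hm1⟩ := (h1 i).2 (by omega)
    obtain ⟨m2, hm2⟩ := (h1 j).2 (by omega)
    exact hs (m1 + m2) (by push_cast; linear_combination hm1 + hm2 - hij)

lemma region_iff {n ℓ : ℕ} {s : ℂ} (hs : ∀ m : ℤ, 2 * s ≠ (m : ℂ)) {lam mu : Fin n → ℂ}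
    (h1 : InLambda n ℓ s lam) (h2 : InLambda n ℓ s mu) (i i' : Fin n)
    (hval : mu i' = lam i) : (i.val < ℓ ↔ i'.val < ℓ) := by
  constructor
  · intro hi
    by_contra hi'
    obtain ⟨m1, hm1⟩ := (h1 i).1 hi
    obtain ⟨m2, hm2⟩ := (h2 i').2 (by omega)
    exact hs (m2 - m1) (by push_cast; linear_combination hm2 - hm1 - hval)
  · intro hi'
    by_contra hi
    obtain ⟨m1, hm1⟩ := (h1 i).2 (by omega)
    obtain ⟨m2, hm2⟩ := (h2 i').1 hi'
    exact hs (m1 - m2) (by push_cast; linear_combination hm1 - hm2 + hval)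

lemma sum_split_eq {n : ℕ} {F G : Fin n → ℤ} (S : Finset (Fin n))
    (hout : ∀ i ∉ S, F i = G i) (hin : ∑ i ∈ S, F i = ∑ i ∈ S, G i) :
    ∑ i, F i = ∑ i, G i := by
  rw [← Finset.sum_sdiff (Finset.subset_univ S), ← Finset.sum_sdiff (Finset.subset_univ S)]
  exact congrArg₂ (· + ·)
    (Finset.sum_congr rfl (fun i hi => hout i (Finset.mem_sdiff.mp hi).2)) hin

open scoped Classical in
lemma wt_expand {n ℓ : ℕ} (s : ℂ) (f : Fin n → ℂ) (z : ℤ) :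
    wtFn n ℓ s f z =
      ∑ i : Fin n, ((if i.val < ℓ then (if f i - s = (z:ℂ) then (1:ℤ) else 0) else 0)
        - (if ℓ ≤ i.val then (if -f i - s = (z:ℂ) then 1 else 0) else 0)) := by
  rw [wtFn, Finset.sum_filter, Finset.sum_filter, ← Finset.sum_sub_distrib]

/-- For `2s ∉ ℤ` and `λ, μ ∈ Λ_{s^ℓ}(n)`, the condition
`μ = w(λ - ∑_j k_j α_j)` for some `w ∈ S_n`, complex `k_j` and pairwise orthogonal roots
`α_j` with `(λ, ᾱ_j) = 0`, is equivalent to `wt(λ) = wt(μ)`. -/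
theorem stmt3 {n ℓ : ℕ} (hl : ℓ ≤ n) (s : ℂ) (hs : ∀ m : ℤ, 2 * s ≠ (m : ℂ))
    (lam mu : Fin n → ℂ) (h1 : InLambda n ℓ s lam) (h2 : InLambda n ℓ s mu) :
    (∃ (w : Equiv.Perm (Fin n)) (N : ℕ) (a b : Fin N → Fin n) (c : Fin N → ℂ),
        (∀ t, a t ≠ b t) ∧
        (∀ t t', t ≠ t' →
          pform (eps n (a t) - eps n (b t)) (eps n (a t') - eps n (b t')) = 0) ∧
        (∀ t, pform lam (eps n (a t) + eps n (b t)) = 0) ∧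
        mu = (lam - ∑ t, c t • (eps n (a t) - eps n (b t))) ∘ w)
    ↔ wtFn n ℓ s lam = wtFn n ℓ s mu := by
  classical
  constructor
  · rintro ⟨w, N, a, b, c, hab, horth, hperp, hmu⟩
    have hperp' : ∀ t, lam (a t) + lam (b t) = 0 := fun t => by
      have h := hperp t; rwa [pform_eps_add] at h
    have hdisj : ∀ t t', t ≠ t' → a t ≠ a t' ∧ a t ≠ b t' ∧ b t ≠ a t' ∧ b t ≠ b t' := by
      intro t t' htt'
      have ho := horth t t' htt'
      rw [pform_eps_sub] at ho
      have habt := hab t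
      have habt' := hab t'
      by_cases h1' : a t = a t' <;> by_cases h2' : a t = b t' <;>
        by_cases h3' : b t = a t' <;> by_cases h4' : b t = b t' <;>
        simp_all <;> norm_num at ho
    set nu : Fin n → ℂ := lam - ∑ t, c t • (eps n (a t) - eps n (b t)) with hnudef
    have hmunu : ∀ i, mu i = nu (w i) := fun i => congrFun hmu i
    have hnu_untouched : ∀ p : Fin n, (∀ t, p ≠ a t) → (∀ t, p ≠ b t) → nu p = lam p := by
      intro p hpa hpb
      rw [hnudef]
      simp only [Pi.sub_apply, Finset.sum_apply, Pi.smul_apply, smul_eq_mul, eps]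
      rw [Finset.sum_eq_zero (fun t _ => by
        rw [if_neg (hpa t), if_neg (hpb t)]; ring)]
      ring
    have hnu_a : ∀ t, nu (a t) = lam (a t) - c t := by
      intro t
      rw [hnudef]
      simp only [Pi.sub_apply, Finset.sum_apply, Pi.smul_apply, smul_eq_mul, eps]
      rw [Finset.sum_eq_single t]
      · rw [if_pos rfl, if_neg (hab t)]; ring
      · intro t' _ htt'
        have hd := hdisj t t' (fun h => htt' h.symm)
        rw [if_neg hd.1, if_neg hd.2.1]; ring
      · intro h; exact absurd (Finset.mem_univ t) h
    have hnu_b : ∀ t, nu (b t) = lam (b t) + c t := by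
      intro t
      rw [hnudef]
      simp only [Pi.sub_apply, Finset.sum_apply, Pi.smul_apply, smul_eq_mul, eps]
      rw [Finset.sum_eq_single t]
      · rw [if_neg (fun h => hab t h.symm), if_pos rfl]; ring
      · intro t' _ htt'
        have hd := hdisj t t' (fun h => htt' h.symm)
        rw [if_neg hd.2.2.1, if_neg hd.2.2.2]; ring
      · intro h; exact absurd (Finset.mem_univ t) h
    have hainj : ∀ x ∈ Finset.univ, ∀ y ∈ Finset.univ, a x = a y → x = y :=
      fun x _ y _ h => by_contra fun hxy => (hdisj x y hxy).1 h
    have hbinj : ∀ x ∈ Finset.univ, ∀ y ∈ Finset.univ, b x = b y → x = y :=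
      fun x _ y _ h => by_contra fun hxy => (hdisj x y hxy).2.2.2 h
    have himg : Disjoint (Finset.image a Finset.univ) (Finset.image b Finset.univ) := by
      rw [Finset.disjoint_left]
      rintro i hia hib
      obtain ⟨t, -, rfl⟩ := Finset.mem_image.mp hia
      obtain ⟨t', -, hbt⟩ := Finset.mem_image.mp hib
      by_cases htt' : t' = t
      · subst htt'; exact hab t' hbt.symm
      · exact (hdisj t t' (fun h => htt' h.symm)).2.1 hbt.symm
    funext z
    rw [wt_expand, wt_expand]
    have hre : ∑ i : Fin n,
        ((if i.val < ℓ then (if mu i - s = (z:ℂ) then (1:ℤ) else 0) else 0)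
          - (if ℓ ≤ i.val then (if -mu i - s = (z:ℂ) then 1 else 0) else 0))
        = ∑ i : Fin n,
        ((if (w.symm i).val < ℓ then (if mu (w.symm i) - s = (z:ℂ) then (1:ℤ) else 0) else 0)
          - (if ℓ ≤ (w.symm i).val then (if -mu (w.symm i) - s = (z:ℂ) then 1 else 0) else 0)) :=
      (Equiv.sum_comp w.symm _).symm
    rw [hre]
    refine sum_split_eq (Finset.image a Finset.univ ∪ Finset.image b Finset.univ) ?_ ?_
    · -- untouched indices
      intro i hi
      rw [Finset.mem_union, not_or] at hi
      have hpa : ∀ t, i ≠ a t := fun t h =>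
        hi.1 (Finset.mem_image.mpr ⟨t, Finset.mem_univ t, h.symm⟩)
      have hpb : ∀ t, i ≠ b t := fun t h =>
        hi.2 (Finset.mem_image.mpr ⟨t, Finset.mem_univ t, h.symm⟩)
      have hval : mu (w.symm i) = lam i := by
        rw [hmunu (w.symm i)]
        simp only [Equiv.apply_symm_apply]
        exact hnu_untouched i hpa hpb
      have hreg := region_iff hs h1 h2 i (w.symm i) hval
      rw [hval]
      rcases Nat.lt_or_ge i.val ℓ with hiℓ | hiℓ
      · rw [if_pos hiℓ, if_pos (hreg.mp hiℓ), if_neg (not_le.mpr hiℓ),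
          if_neg (not_le.mpr (hreg.mp hiℓ))]
      · have hwi : ¬ (w.symm i).val < ℓ := fun h => absurd (hreg.mpr h) (not_lt.mpr hiℓ)
        rw [if_neg (not_lt.mpr hiℓ), if_neg hwi, if_pos hiℓ, if_pos (Nat.le_of_not_lt hwi)]
    · -- touched indices
      rw [Finset.sum_union himg, Finset.sum_union himg,
        Finset.sum_image hainj, Finset.sum_image hbinj,
        Finset.sum_image hainj, Finset.sum_image hbinj,
        ← Finset.sum_add_distrib, ← Finset.sum_add_distrib]
      rw [Finset.sum_eq_zero, Finset.sum_eq_zero]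
      · intro t _
        have hval : mu (w.symm (a t)) + mu (w.symm (b t)) = 0 := by
          rw [hmunu (w.symm (a t)), hmunu (w.symm (b t))]
          simp only [Equiv.apply_symm_apply]
          rw [hnu_a, hnu_b]
          linear_combination hperp' t
        have := pair_contrib hs h2 (w.symm (a t)) (w.symm (b t)) hval z
        convert this using 2
      · intro t _
        exact pair_contrib hs h1 (a t) (b t) (hperp' t) z
  · intro hwt
    obtain ⟨N, a, b, c, w, ha, hb, hainj, hbinj, hzero, hcount, hmu⟩ :=
      key (Multiset.card (plA n ℓ lam - plA n ℓ mu)) lam mu h1 h2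
        (wt_to_multiset h1 h2 hwt) rfl
    refine ⟨w, N, a, b, c, ?_, ?_, ?_, hmu⟩
    · intro t
      intro h
      have := ha t; rw [h] at this
      have := hb t; omega
    · intro t t' htt'
      rw [pform_eps_sub]
      have h1' : a t ≠ a t' := fun h => htt' (hainj h)
      have h2' : a t ≠ b t' := fun h => by have := ha t; have := hb t'; rw [h] at *; omega
      have h3' : b t ≠ a t' := fun h => by have := hb t; have := ha t'; rw [h] at *; omega
      have h4' : b t ≠ b t' := fun h => htt' (hbinj h)
      rw [if_neg h1', if_neg h2', if_neg h3', if_neg h4']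
      ring
    · intro t
      rw [pform_eps_add]
      exact hzero t

end
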